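/- Let q be an odd prime and set c_q := Σ_{j=1}^{q−1} j·j*. There exists a polynomial h ∈ ℚ[x] of degree at most q such that h(x) = Li_{1−q}(−x/(1−x)) for every rational x ≠ 1, and every coefficient of the polynomial f_q(x) − c_q·h(x) lies in q²ℤ_(q); moreover q ∤ c_q. In other words, f_q(x) ≡ c_q · Li_{1−q}(−x/(1−x)) (mod q²). -/

import Mathlib

open Finset Polynomial

/-- `Li s` is the polylogarithm of negative index, `Li_{-s}(x) = (x d/dx)^s (x/(1-x))`,
viewed as a function `ℚ → ℚ` (well defined away from `x = 1`). -/
noncomputable def Li (s : ℕ) : ℚ → ℚ :=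
  (fun f x => x * deriv f x)^[s] (fun x => x / (1 - x))

/-- `zLocSpan q c x` means `x ∈ c·ℤ_(q)`, i.e. `x = c·(a/b)` with `q ∤ b`. -/
def zLocSpan (q : ℕ) (c x : ℚ) : Prop :=
  ∃ a b : ℤ, ¬ (q : ℤ) ∣ b ∧ x * (b : ℚ) = c * (a : ℚ)

/-- The integer coefficient `Σ_{1≤j,k,l≤q−1, k ≡ jl (mod q)} (−1)^k C(t,k)·j·l`. -/
def fqCoeff (q t : ℕ) : ℤ :=
  ∑ j ∈ Finset.Icc 1 (q-1), ∑ k ∈ Finset.Icc 1 (q-1), ∑ l ∈ Finset.Icc 1 (q-1),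
    if (k : ZMod q) = (j : ZMod q) * (l : ZMod q) then (-1)^k * (t.choose k : ℤ) * j * l else 0

/-- The polynomial `f_q(x) = Σ_{t=1}^q fqCoeff q t · x^t / t ∈ ℚ[x]` (in fact in `ℤ_(q)[x]`). -/
noncomputable def fqPoly (q : ℕ) : Polynomial ℚ :=
  ∑ t ∈ Finset.Icc 1 q, Polynomial.C ((fqCoeff q t : ℚ) / (t : ℚ)) * Polynomial.X ^ t

/-- Reduction of a rational with denominator prime to `N` to `ZMod N`. -/
def ratToZMod (N : ℕ) (x : ℚ) : ZMod N := (x.num : ZMod N) * ((x.den : ℕ) : ZMod N)⁻¹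

/-- The set `S_q = { a − f_q(a) mod q² : a = 0,…,q−1 } ⊆ ℤ/q²ℤ`. -/
def Sq (q : ℕ) : Set (ZMod (q^2)) :=
  { y | ∃ a : ℕ, a < q ∧ y = ratToZMod (q^2) ((a : ℚ) - (fqPoly q).eval (a : ℚ)) }

/-- Congruence modulo the ideal of `ℤ[ζ]` generated by `(1-ζ)^e`, for elements of `ℂ`. -/
def congZeta (ζ : ℂ) (e : ℕ) (x y : ℂ) : Prop :=
  ∃ P : Polynomial ℤ, x - y = (1 - ζ)^e * (Polynomial.aeval ζ P)

/-- `jstar q j` is the representative in `[0, q-1]` of the inverse of `j` mod `q`. -/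
def jstar (q j : ℕ) : ℕ := ((j : ZMod q)⁻¹).val

/-- `istar q a` is the representative in `[0, q-1]` of the inverse of the integer `a` mod `q`. -/
def istar (q : ℕ) (a : ℤ) : ℕ := ((a : ZMod q)⁻¹).val

/-- `μ^{(i)} = ζ^i · ∏_{j=1}^{q−1} (m − n ζ^j)^{j*} ∈ ℤ[ζ_q] ⊆ ℂ`. -/
noncomputable def mu (q : ℕ) (m n : ℤ) (i : ℕ) (ζ : ℂ) : ℂ :=
  ζ^i * ∏ j ∈ Finset.Icc 1 (q-1), ((m : ℂ) - (n : ℂ) * ζ^j)^(jstar q j)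

/-- `𝓕_s(x) = Σ_{t=0}^s Σ_{s₁,…,s_t ≥ 1, s₁+⋯+s_t=s} s!/(s₁!⋯s_t!) x^t`, as a function `ℚ → ℚ`. -/
def Fcal (s : ℕ) (x : ℚ) : ℚ :=
  ∑ t ∈ Finset.range (s+1),
    ∑ c ∈ (Finset.Nat.antidiagonalTuple t s).filter (fun c => ∀ i, 1 ≤ c i),
      (Nat.multinomial Finset.univ c : ℚ) * x ^ t

/-- Coefficientwise reduction of `f_q` mod `q²`. -/
noncomputable def fqBar (q : ℕ) : Polynomial (ZMod (q^2)) :=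
  ∑ t ∈ Finset.Icc 1 q,
    Polynomial.C (ratToZMod (q^2) ((fqCoeff q t : ℚ) / (t : ℚ))) * Polynomial.X ^ t

noncomputable def Hpoly : ℕ → Polynomial ℚ
  | 0 => -Polynomial.X
  | s+1 => Polynomial.X * (1 - Polynomial.X) * (Hpoly s).derivative

lemma Hpoly_natDegree_le (s : ℕ) : (Hpoly s).natDegree ≤ s + 1 := by
  induction s with
  | zero => simp [Hpoly]
  | succ s ih =>
    rw [Hpoly]
    refine le_trans (Polynomial.natDegree_mul_le) ?_
    have h1 : (Polynomial.X * (1 - Polynomial.X) : Polynomial ℚ).natDegree ≤ 2 := by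
      refine le_trans Polynomial.natDegree_mul_le ?_
      have : (1 - Polynomial.X : Polynomial ℚ).natDegree ≤ 1 := by
        refine le_trans (Polynomial.natDegree_sub_le _ _) ?_
        simp
      simpa using add_le_add (Polynomial.natDegree_X_le (R := ℚ)) this
    have h2 : ((Hpoly s).derivative).natDegree ≤ s := by
      refine le_trans (Polynomial.natDegree_derivative_le _) ?_
      have := ih
      omega
    omega

lemma Li_eval (s : ℕ) (t : ℚ) (ht : t ≠ 1) :
    Li s t = (Hpoly s).eval (t / (t - 1)) := by
  induction s generalizing t with
  | zero =>
    have h1 : t - 1 ≠ 0 := sub_ne_zero.mpr ht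
    have h2 : (1:ℚ) - t ≠ 0 := fun h => ht (by linarith [sub_eq_zero.mp h])
    simp only [Li, Function.iterate_zero, id_eq, Hpoly, eval_neg, eval_X]
    field_simp
    ring
  | succ s ih =>
    have h1 : t - 1 ≠ 0 := sub_ne_zero.mpr ht
    have hLi : Li (s+1) t = t * deriv (Li s) t := by
      rw [Li, Function.iterate_succ_apply']; rfl
    have hev : Li s =ᶠ[nhds t] (fun u => (Hpoly s).eval (u / (u - 1))) := by
      have hopen : IsOpen {u : ℚ | u ≠ 1} := isOpen_compl_singleton
      filter_upwards [hopen.mem_nhds ht] with u hu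
      exact ih u hu
    have hd1 : HasDerivAt (fun u : ℚ => u / (u - 1)) (-1 / (t-1)^2) t := by
      have := (hasDerivAt_id t).div ((hasDerivAt_id t).sub_const 1) h1
      simp at this; exact this
    have hd2 : HasDerivAt (fun u : ℚ => (Hpoly s).eval (u / (u - 1)))
        ((Hpoly s).derivative.eval (t/(t-1)) * (-1 / (t-1)^2)) t :=
      by have := ((Hpoly s).hasDerivAt (t/(t-1))).comp t hd1; exact this
    have hder : deriv (Li s) t = (Hpoly s).derivative.eval (t/(t-1)) * (-1 / (t-1)^2) := by
      rw [hev.deriv_eq]; exact hd2.deriv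
    rw [hLi, hder, Hpoly]
    simp only [eval_mul, eval_X, eval_sub, eval_one]
    set E := (Hpoly s).derivative.eval (t/(t-1)) with hE
    field_simp
    ring

def bcoef (s t : ℕ) : ℚ :=
  ∑ n ∈ Icc 1 t, (-1:ℚ)^n * ((t-1).choose (n-1) : ℚ) * (n:ℚ)^s

lemma sum_Icc_one (t : ℕ) (f : ℕ → ℚ) : ∑ n ∈ Icc 1 t, f n = ∑ i ∈ range t, f (1+i) := by
  rw [← Finset.Ico_add_one_right_eq_Icc, Finset.sum_Ico_eq_sum_range]
  simp

lemma choose_term_id (u n : ℕ) (h1 : 1 ≤ n) (h2 : n ≤ u + 1) :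
    (n:ℚ) * (u.choose (n-1) : ℚ) = (u+1) * (u.choose (n-1)) - u * ((u-1).choose (n-1)) := by
  rcases u with _ | v
  · interval_cases n
    · simp
  · have key := Nat.choose_mul_succ_eq v (n-1)
    have hsub : v + 1 - (n-1) = v + 2 - n := by omega
    rw [hsub] at key
    have hc : ((v.choose (n-1) * (v+1) : ℕ) : ℚ) = (((v+1).choose (n-1) * (v+2-n) : ℕ) : ℚ) := by
      exact_mod_cast congrArg (fun m : ℕ => (m:ℚ)) key
    have hn : ((v+2-n : ℕ) : ℚ) = (v:ℚ) + 2 - n := by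
      have : n ≤ v + 2 := by omega
      push_cast [Nat.cast_sub this]; ring
    push_cast [hn] at hc
    have : (v:ℚ)+1-1 = (v:ℚ) := by ring
    simp only [Nat.add_sub_cancel]
    push_cast
    nlinarith [hc]

lemma bcoef_rec (s u : ℕ) :
    bcoef (s+1) (u+1) = (u+1) * bcoef s (u+1) - u * bcoef s u := by
  unfold bcoef
  rw [Finset.mul_sum, Finset.mul_sum]
  have hext : ∑ n ∈ Icc 1 u, (u:ℚ) * ((-1:ℚ)^n * ((u-1).choose (n-1) : ℚ) * (n:ℚ)^s)
      = ∑ n ∈ Icc 1 (u+1), (u:ℚ) * ((-1:ℚ)^n * ((u-1).choose (n-1) : ℚ) * (n:ℚ)^s) := by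
    apply Finset.sum_subset
    · intro x hx; simp only [mem_Icc] at *; omega
    · intro x hx hx'
      simp only [mem_Icc] at hx hx'
      have hxu : x = u + 1 := by omega
      rcases Nat.eq_zero_or_pos u with h0 | h0
      · simp [h0]
      · have : (u-1).choose (x-1) = 0 := by
          apply Nat.choose_eq_zero_of_lt; omega
        simp [this]
  -- main computation
  rw [hext, ← Finset.sum_sub_distrib]
  apply Finset.sum_congr rfl
  intro n hn
  simp only [mem_Icc] at hn
  have := choose_term_id u n hn.1 hn.2
  simp only [Nat.add_sub_cancel] at *
  linear_combination ((-1:ℚ)^n * (n:ℚ)^s) * this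

lemma bcoef_zero_s (t : ℕ) (ht : 2 ≤ t) : bcoef 0 t = 0 := by
  unfold bcoef
  rw [sum_Icc_one]
  have h := Int.alternating_sum_range_choose (n := t - 1)
  rw [if_neg (by omega)] at h
  have h2 : ((∑ m ∈ range (t-1+1), (-1:ℤ)^m * ((t-1).choose m : ℤ) : ℤ) : ℚ) = 0 := by
    rw [h]; simp
  push_cast at h2
  have h3 : t - 1 + 1 = t := by omega
  rw [h3] at h2
  calc ∑ i ∈ range t, (-1:ℚ)^(1+i) * ((t-1).choose (1+i-1) : ℚ) * ((1+i:ℕ):ℚ)^0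
      = -∑ i ∈ range t, (-1:ℚ)^i * ((t-1).choose i : ℚ) := by
        rw [← Finset.sum_neg_distrib]
        apply Finset.sum_congr rfl
        intro i _
        simp only [Nat.add_sub_cancel_left, pow_zero, pow_add, pow_one]
        ring
    _ = 0 := by rw [h2]; ring

lemma bcoef_vanish (s t : ℕ) (h : s + 2 ≤ t) : bcoef s t = 0 := by
  induction s generalizing t with
  | zero => exact bcoef_zero_s t (by omega)
  | succ s ih =>
    obtain ⟨u, rfl⟩ : ∃ u, t = u + 1 := ⟨t - 1, by omega⟩
    rw [bcoef_rec, ih (u+1) (by omega), ih u (by omega)]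
    ring

lemma Hpoly_coeff (s t : ℕ) : (Hpoly s).coeff t = bcoef s t := by
  induction s generalizing t with
  | zero =>
    rw [Hpoly, coeff_neg]
    rcases t with _ | t
    · simp [bcoef]
    · rcases t with _ | t
      · simp [bcoef, coeff_X_one]
      · rw [bcoef_zero_s _ (by omega), coeff_X]
        rw [if_neg (by omega)]
        simp
  | succ s ih =>
    have hD : ∀ i : ℕ, ((Hpoly s).derivative).coeff i = bcoef s (i+1) * (i+1) := by
      intro i; rw [coeff_derivative, ih]
    rcases t with _ | u
    · rw [Hpoly]
      rw [mul_assoc, coeff_X_mul_zero]  -- maybe wrong name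
      simp [bcoef]
    · have : (Hpoly (s+1)).coeff (u+1) = ((1 - Polynomial.X) * (Hpoly s).derivative).coeff u := by
        rw [Hpoly, mul_assoc, coeff_X_mul]
      rw [this, sub_mul, one_mul, coeff_sub]
      rcases u with _ | w
      · rw [coeff_X_mul_zero, hD, bcoef_rec]
        push_cast; ring
      · rw [coeff_X_mul, hD, hD, bcoef_rec]
        push_cast; ring

lemma binom_aux (n : ℕ) (a b : ℤ) : ∃ c, (a+b)^n = a^n + n * a^(n-1) * b + b^2 * c := by
  induction n with
  | zero => exact ⟨0, by norm_num⟩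
  | succ n ih =>
    obtain ⟨c, hc⟩ := ih
    refine ⟨n * a^(n-1) + c*(a+b), ?_⟩
    have ha : (n:ℤ) * a^(n-1) * a = n * a^n := by
      rcases n with _ | m
      · norm_num
      · have h1 : a^m * a = a^(m+1) := (pow_succ a m).symm
        simp only [Nat.add_sub_cancel]
        push_cast
        linear_combination ((m:ℤ)+1) * h1
    have hstep : (a+b)^(n+1) = (a+b)^n * (a+b) := pow_succ (a+b) n
    rw [hstep, hc]
    simp only [Nat.add_sub_cancel]
    push_cast
    linear_combination b * ha

section NT
variable (q : ℕ) [Fact q.Prime]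

def Wq (x : ℤ) : ℤ := (x^(q-1) - 1)/q

lemma fermat_int (x : ℤ) (hx : ¬(q:ℤ)∣x) : ((x : ZMod q))^(q-1) = 1 := by
  apply ZMod.pow_card_sub_one_eq_one
  rwa [Ne, ZMod.intCast_zmod_eq_zero_iff_dvd]

lemma Wq_dvd (x : ℤ) (hx : ¬(q:ℤ)∣x) : (q:ℤ) ∣ x^(q-1) - 1 := by
  rw [← ZMod.intCast_zmod_eq_zero_iff_dvd]
  push_cast
  rw [fermat_int q x hx]
  ring

lemma qWq (x : ℤ) (hx : ¬(q:ℤ)∣x) : (q:ℤ) * Wq q x = x^(q-1) - 1 :=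
  Int.mul_ediv_cancel' (Wq_dvd q x hx)

lemma q_ne_zero' : (q:ℤ) ≠ 0 :=
  Int.natCast_ne_zero.mpr (Fact.out : q.Prime).ne_zero

lemma Wq_mul (x y : ℤ) (hx : ¬(q:ℤ)∣x) (hy : ¬(q:ℤ)∣y) :
    ((Wq q (x*y) : ℤ) : ZMod q) = (Wq q x : ZMod q) + (Wq q y : ZMod q) := by
  have hqp : Prime (q:ℤ) := Nat.prime_iff_prime_int.mp Fact.out
  have hxy : ¬(q:ℤ)∣x*y := fun h => ((hqp.dvd_mul.mp h).elim hx hy)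
  have key : (q:ℤ) * Wq q (x*y) = (q:ℤ) * (x^(q-1) * Wq q y + Wq q x) := by
    rw [qWq q _ hxy, mul_pow]
    linear_combination -(x^(q-1) * qWq q y hy) - qWq q x hx
  have key2 : Wq q (x*y) = x^(q-1) * Wq q y + Wq q x :=
    mul_left_cancel₀ (q_ne_zero' q) key
  rw [key2]
  push_cast
  rw [fermat_int q x hx]
  ring

lemma q_dvd_shift {x t : ℤ} (h : ¬(q:ℤ)∣x) : ¬(q:ℤ)∣(x + q*t) := by
  intro hdvd
  exact h (by simpa using dvd_sub hdvd (Dvd.intro t rfl))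

lemma Wq_shift (x t : ℤ) (hx : ¬(q:ℤ)∣x) :
    ((Wq q (x + q*t) : ℤ) : ZMod q) = (Wq q x : ZMod q) - (x:ZMod q)^(q-2) * (t : ZMod q) := by
  obtain ⟨c, hc⟩ := binom_aux (q-1) x ((q:ℤ)*t)
  have hx2 : ¬(q:ℤ)∣(x + q*t) := q_dvd_shift q hx
  have hexp : (q:ℕ) - 1 - 1 = q - 2 := by omega
  have key : (q:ℤ) * Wq q (x + q*t) =
      (q:ℤ) * (Wq q x + ((q-1:ℕ):ℤ) * x^(q-2) * t + q * t^2 * c) := by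
    rw [qWq q _ hx2, hc, hexp]
    linear_combination -qWq q x hx
  have key2 : Wq q (x + q*t) = Wq q x + ((q-1:ℕ):ℤ) * x^(q-2) * t + q * t^2 * c :=
    mul_left_cancel₀ (q_ne_zero' q) key
  rw [key2]
  push_cast
  have h1 : ((q:ℕ) : ZMod q) = 0 := ZMod.natCast_self q
  have hq1 : 1 ≤ q := (Fact.out : q.Prime).pos
  have h2 : (((q:ℕ) - 1 : ℕ) : ZMod q) = -1 := by
    rw [Nat.cast_sub hq1, h1]; ring
  push_cast at h2
  rw [h2]
  push_cast [h1]
  ring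

end NT

def vk (q k j : ℕ) : ℕ := ((k : ZMod q) * (j : ZMod q)⁻¹).val

def gkZ (q k : ℕ) : ℤ :=
  ∑ j ∈ Finset.Icc 1 (q-1), ∑ l ∈ Finset.Icc 1 (q-1),
    if (k : ZMod q) = (j : ZMod q) * (l : ZMod q) then (j:ℤ)*(l:ℤ) else 0

section Units
variable (q : ℕ) [Fact q.Prime]

lemma unit_ne {j : ℕ} (hj : j ∈ Finset.Icc 1 (q-1)) : (j : ZMod q) ≠ 0 := by
  simp only [Finset.mem_Icc] at hj
  have hq := (Fact.out : q.Prime).two_le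
  rw [Ne, ZMod.natCast_eq_zero_iff]
  intro hdvd
  have := Nat.le_of_dvd (by omega) hdvd
  omega

lemma notdvd_int {j : ℕ} (hj : j ∈ Finset.Icc 1 (q-1)) : ¬ (q:ℤ) ∣ (j:ℤ) := by
  rw [Int.natCast_dvd_natCast]
  simp only [Finset.mem_Icc] at hj
  have hq := (Fact.out : q.Prime).two_le
  intro hdvd
  have := Nat.le_of_dvd (by omega) hdvd
  omega

lemma val_mem {c : ZMod q} (hc : c ≠ 0) : c.val ∈ Finset.Icc 1 (q-1) := by
  have h1 : c.val < q := ZMod.val_lt c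
  have h2 : c.val ≠ 0 := fun h => hc (by rwa [← ZMod.val_eq_zero])
  simp only [Finset.mem_Icc]; omega

lemma cast_val (c : ZMod q) : ((c.val : ℕ) : ZMod q) = c := ZMod.natCast_rightInverse c

lemma nat_lt_cast_val {j : ℕ} (hj : j ∈ Finset.Icc 1 (q-1)) : ((j : ZMod q)).val = j := by
  apply ZMod.val_cast_of_lt
  simp only [Finset.mem_Icc] at hj
  have hq := (Fact.out : q.Prime).two_le
  omega

lemma vk_mem {k j : ℕ} (hk : k ∈ Finset.Icc 1 (q-1)) (hj : j ∈ Finset.Icc 1 (q-1)) :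
    vk q k j ∈ Finset.Icc 1 (q-1) :=
  val_mem q (mul_ne_zero (unit_ne q hk) (inv_ne_zero (unit_ne q hj)))

lemma vk_cast {k j : ℕ} : ((vk q k j : ℕ) : ZMod q) = (k : ZMod q) * (j : ZMod q)⁻¹ :=
  cast_val q _

lemma vk_mul {k j : ℕ} (hj : j ∈ Finset.Icc 1 (q-1)) :
    (j : ZMod q) * ((vk q k j : ℕ) : ZMod q) = (k : ZMod q) := by
  rw [vk_cast]
  field_simp [unit_ne q hj]

lemma vk_invol {k j : ℕ} (hk : k ∈ Finset.Icc 1 (q-1)) (hj : j ∈ Finset.Icc 1 (q-1)) :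
    vk q k (vk q k j) = j := by
  have h1 : ((vk q k j : ℕ) : ZMod q) = (k : ZMod q) * (j : ZMod q)⁻¹ := vk_cast q
  show ((k : ZMod q) * ((vk q k j : ℕ) : ZMod q)⁻¹).val = j
  rw [h1, mul_inv, inv_inv, ← mul_assoc, mul_inv_cancel₀ (unit_ne q hk), one_mul,
    nat_lt_cast_val q hj]

lemma jstar_cast {j : ℕ} : ((jstar q j : ℕ) : ZMod q) = (j : ZMod q)⁻¹ := cast_val q _

lemma jstar_mem {j : ℕ} (hj : j ∈ Finset.Icc 1 (q-1)) :
    jstar q j ∈ Finset.Icc 1 (q-1) :=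
  val_mem q (inv_ne_zero (unit_ne q hj))

lemma jstar_mul {j : ℕ} (hj : j ∈ Finset.Icc 1 (q-1)) :
    (j : ZMod q) * ((jstar q j : ℕ) : ZMod q) = 1 := by
  rw [jstar_cast, mul_inv_cancel₀ (unit_ne q hj)]

lemma jstar_invol {j : ℕ} (hj : j ∈ Finset.Icc 1 (q-1)) : jstar q (jstar q j) = j := by
  show (((jstar q j : ℕ) : ZMod q)⁻¹).val = j
  rw [jstar_cast, inv_inv, nat_lt_cast_val q hj]

lemma gk_eq {k : ℕ} (hk : k ∈ Finset.Icc 1 (q-1)) :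
    gkZ q k = ∑ j ∈ Finset.Icc 1 (q-1), (j:ℤ) * (vk q k j : ℤ) := by
  unfold gkZ
  apply Finset.sum_congr rfl
  intro j hj
  have hcond : ∀ l ∈ Finset.Icc 1 (q-1),
      ((k : ZMod q) = (j : ZMod q) * (l : ZMod q)) ↔ l = vk q k j := by
    intro l hl
    constructor
    · intro h
      have : (l : ZMod q) = (k : ZMod q) * (j : ZMod q)⁻¹ := by
        field_simp [unit_ne q hj] at h ⊢
        rw [h]
      have := congrArg ZMod.val this
      rwa [nat_lt_cast_val q hl] at this
    · rintro rfl
      rw [vk_mul q hj]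
  calc ∑ l ∈ Finset.Icc 1 (q-1), (if (k : ZMod q) = (j : ZMod q) * (l : ZMod q) then (j:ℤ)*(l:ℤ) else 0)
      = ∑ l ∈ Finset.Icc 1 (q-1), (if l = vk q k j then (j:ℤ)*(l:ℤ) else 0) := by
        apply Finset.sum_congr rfl
        intro l hl
        rw [if_congr (hcond l hl) rfl rfl]
    _ = (j:ℤ) * (vk q k j : ℤ) := by
        rw [Finset.sum_ite_eq' (Finset.Icc 1 (q-1)) (vk q k j)]
        rw [if_pos (vk_mem q hk hj)]

lemma gk_top : gkZ q q = 0 := by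
  unfold gkZ
  apply Finset.sum_eq_zero
  intro j hj
  apply Finset.sum_eq_zero
  intro l hl
  rw [if_neg]
  intro h
  rw [ZMod.natCast_self] at h
  exact mul_ne_zero (unit_ne q hj) (unit_ne q hl) h.symm

end Units

def cZ (q : ℕ) : ℤ := ∑ j ∈ Finset.Icc 1 (q-1), (j:ℤ) * (jstar q j : ℤ)

section Key
variable (q : ℕ) [Fact q.Prime]

lemma key_dvd (hq3 : 3 ≤ q) {k : ℕ} (hk : k ∈ Finset.Icc 1 (q-1)) :
    (q:ℤ)^2 ∣ gkZ q k - cZ q * (k:ℤ)^q := by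
  have hqp : Prime (q:ℤ) := Nat.prime_iff_prime_int.mp Fact.out
  have hndk : ¬(q:ℤ) ∣ (k:ℤ) := notdvd_int q hk
  -- exact division definitions
  set m : ℕ → ℤ := fun j => ((j:ℤ) * (vk q k j : ℤ) - (k:ℤ))/(q:ℤ) with hmdef
  set n : ℕ → ℤ := fun j => ((j:ℤ) * (jstar q j : ℤ) - 1)/(q:ℤ) with hndef
  have hm : ∀ j ∈ Finset.Icc 1 (q-1), (j:ℤ) * (vk q k j : ℤ) = (k:ℤ) + (q:ℤ) * m j := by
    intro j hj
    have hdvd : (q:ℤ) ∣ ((j:ℤ) * (vk q k j : ℤ) - (k:ℤ)) := by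
      rw [← ZMod.intCast_zmod_eq_zero_iff_dvd]
      push_cast
      rw [vk_mul q hj]
      ring
    have := Int.mul_ediv_cancel' hdvd
    show (j:ℤ) * (vk q k j : ℤ) = (k:ℤ) + (q:ℤ) * (((j:ℤ) * (vk q k j : ℤ) - (k:ℤ))/(q:ℤ))
    linarith [this]
  have hn : ∀ j ∈ Finset.Icc 1 (q-1), (j:ℤ) * (jstar q j : ℤ) = 1 + (q:ℤ) * n j := by
    intro j hj
    have hdvd : (q:ℤ) ∣ ((j:ℤ) * (jstar q j : ℤ) - 1) := by
      rw [← ZMod.intCast_zmod_eq_zero_iff_dvd]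
      push_cast
      rw [jstar_mul q hj]
      ring
    have := Int.mul_ediv_cancel' hdvd
    show (j:ℤ) * (jstar q j : ℤ) = 1 + (q:ℤ) * (((j:ℤ) * (jstar q j : ℤ) - 1)/(q:ℤ))
    linarith [this]
  have hsplit : gkZ q k - cZ q * (k:ℤ)^q =
      ∑ j ∈ Finset.Icc 1 (q-1), ((j:ℤ)*(vk q k j : ℤ) - ((j:ℤ)*(jstar q j : ℤ))*(k:ℤ)^q) := by
    rw [gk_eq q hk]
    unfold cZ
    rw [Finset.sum_mul, ← Finset.sum_sub_distrib]
  have hcard : (Finset.Icc 1 (q-1)).card = q - 1 := by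
    rw [Nat.card_Icc]; omega
  have hsum : gkZ q k - cZ q * (k:ℤ)^q = ((q-1:ℕ):ℤ) * ((k:ℤ) - (k:ℤ)^q)
      + (q:ℤ) * ∑ j ∈ Finset.Icc 1 (q-1), (m j - n j * (k:ℤ)^q) := by
    rw [hsplit]
    rw [Finset.sum_congr rfl (fun j hj => by
      rw [hm j hj, hn j hj]; ring
      : ∀ j ∈ Finset.Icc 1 (q-1), ((j:ℤ)*(vk q k j : ℤ) - ((j:ℤ)*(jstar q j : ℤ))*(k:ℤ)^q)
        = (((k:ℤ) - (k:ℤ)^q) + (q:ℤ) * (m j - n j * (k:ℤ)^q)))]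
    rw [Finset.sum_add_distrib, Finset.sum_const, hcard, Finset.mul_sum]
    rw [nsmul_eq_mul]
  have hKq : (k:ℤ)^q - (k:ℤ) = (q:ℤ) * ((k:ℤ) * Wq q (k:ℤ)) := by
    have h1 := qWq q (k:ℤ) hndk
    have h2 : (k:ℤ)^q = (k:ℤ)^(q-1) * (k:ℤ) := by
      rw [← pow_succ]; congr 1; omega
    rw [h2]
    linear_combination (-(k:ℤ)) * h1
  have hfinal : gkZ q k - cZ q * (k:ℤ)^q = (q:ℤ) *
      ((∑ j ∈ Finset.Icc 1 (q-1), (m j - n j * (k:ℤ)^q)) - ((q-1:ℕ):ℤ) * ((k:ℤ) * Wq q (k:ℤ))) := by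
    rw [hsum]
    linear_combination (-((q-1:ℕ):ℤ)) * hKq
  rw [hfinal, pow_two]
  apply mul_dvd_mul_left
  -- now work mod q
  rw [← ZMod.intCast_zmod_eq_zero_iff_dvd]
  have hq1 : ((q - 1 : ℕ) : ZMod q) = -1 := by
    have hq1' : 1 ≤ q := by omega
    rw [Nat.cast_sub hq1', ZMod.natCast_self]; ring
  have hkne : ((k : ℕ) : ZMod q) ≠ 0 := unit_ne q hk
  have hkq : ((k : ZMod q))^q = (k : ZMod q) := ZMod.pow_card _
  have hkpow : ((k : ZMod q))^(q-2) * (k : ZMod q) = 1 := by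
    rw [← pow_succ]
    have : q - 2 + 1 = q - 1 := by omega
    rw [this]
    exact ZMod.pow_card_sub_one_eq_one hkne
  -- per-term values mod q
  have hmbar : ∀ j ∈ Finset.Icc 1 (q-1), ((m j : ℤ) : ZMod q) =
      (k:ZMod q) * (((Wq q (k:ℤ) : ℤ) : ZMod q) - ((Wq q (j:ℤ) : ℤ) : ZMod q)
        - ((Wq q ((vk q k j : ℕ):ℤ) : ℤ) : ZMod q)) := by
    intro j hj
    have hvmem := vk_mem q hk hj
    have e1 : ((Wq q ((j:ℤ) * ((vk q k j : ℕ):ℤ)) : ℤ) : ZMod q)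
        = ((Wq q (j:ℤ) : ℤ) : ZMod q) + ((Wq q ((vk q k j : ℕ):ℤ) : ℤ) : ZMod q) :=
      Wq_mul q _ _ (notdvd_int q hj) (notdvd_int q hvmem)
    have e3 : ((Wq q ((k:ℤ) + (q:ℤ) * m j) : ℤ) : ZMod q)
        = ((Wq q (k:ℤ) : ℤ) : ZMod q) - ((k:ℤ) : ZMod q)^(q-2) * ((m j : ℤ) : ZMod q) :=
      Wq_shift q (k:ℤ) (m j) hndk
    rw [← hm j hj] at e3
    rw [e1] at e3
    have e4 : ((k : ZMod q))^(q-2) * ((m j : ℤ) : ZMod q) =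
        ((Wq q (k:ℤ) : ℤ) : ZMod q) - ((Wq q (j:ℤ) : ℤ) : ZMod q)
          - ((Wq q ((vk q k j : ℕ):ℤ) : ℤ) : ZMod q) := by
      push_cast at e3
      linear_combination e3
    calc ((m j : ℤ) : ZMod q) = ((k : ZMod q))^(q-2) * (k : ZMod q) * ((m j : ℤ) : ZMod q) := by
          rw [hkpow, one_mul]
      _ = (k:ZMod q) * (((k : ZMod q))^(q-2) * ((m j : ℤ) : ZMod q)) := by ring
      _ = _ := by rw [e4]
  have hnbar : ∀ j ∈ Finset.Icc 1 (q-1), ((n j : ℤ) : ZMod q) =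
      -(((Wq q (j:ℤ) : ℤ) : ZMod q) + ((Wq q ((jstar q j : ℕ):ℤ) : ℤ) : ZMod q)) := by
    intro j hj
    have hsmem := jstar_mem q hj
    have e1 : ((Wq q ((j:ℤ) * ((jstar q j : ℕ):ℤ)) : ℤ) : ZMod q)
        = ((Wq q (j:ℤ) : ℤ) : ZMod q) + ((Wq q ((jstar q j : ℕ):ℤ) : ℤ) : ZMod q) :=
      Wq_mul q _ _ (notdvd_int q hj) (notdvd_int q hsmem)
    have hnd1 : ¬ (q:ℤ) ∣ (1:ℤ) := by
      intro h
      have := Int.le_of_dvd one_pos h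
      omega
    have e3 : ((Wq q ((1:ℤ) + (q:ℤ) * n j) : ℤ) : ZMod q)
        = ((Wq q (1:ℤ) : ℤ) : ZMod q) - ((1:ℤ) : ZMod q)^(q-2) * ((n j : ℤ) : ZMod q) :=
      Wq_shift q (1:ℤ) (n j) hnd1
    rw [← hn j hj] at e3
    rw [e1] at e3
    have hW1 : Wq q (1:ℤ) = 0 := by
      unfold Wq
      simp
    rw [hW1] at e3
    linear_combination e3
  -- sums over bijections
  have hvsum : ∑ j ∈ Finset.Icc 1 (q-1), ((Wq q ((vk q k j : ℕ):ℤ) : ℤ) : ZMod q)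
      = ∑ j ∈ Finset.Icc 1 (q-1), ((Wq q (j:ℤ) : ℤ) : ZMod q) := by
    apply Finset.sum_nbij' (i := fun j => vk q k j) (j := fun j => vk q k j)
    · intro a ha; exact vk_mem q hk ha
    · intro a ha; exact vk_mem q hk ha
    · intro a ha; exact vk_invol q hk ha
    · intro a ha; exact vk_invol q hk ha
    · intro a ha; rfl
  have hssum : ∑ j ∈ Finset.Icc 1 (q-1), ((Wq q ((jstar q j : ℕ):ℤ) : ℤ) : ZMod q)
      = ∑ j ∈ Finset.Icc 1 (q-1), ((Wq q (j:ℤ) : ℤ) : ZMod q) := by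
    apply Finset.sum_nbij' (i := fun j => jstar q j) (j := fun j => jstar q j)
    · intro a ha; exact jstar_mem q ha
    · intro a ha; exact jstar_mem q ha
    · intro a ha; exact jstar_invol q ha
    · intro a ha; exact jstar_invol q ha
    · intro a ha; rfl
  -- final computation
  push_cast
  rw [Finset.sum_sub_distrib]
  have hA : ∑ j ∈ Finset.Icc 1 (q-1), ((m j : ℤ) : ZMod q)
      = -((k:ZMod q) * ((Wq q (k:ℤ) : ℤ) : ZMod q))
        - 2 * ((k:ZMod q) * ∑ j ∈ Finset.Icc 1 (q-1), ((Wq q (j:ℤ) : ℤ) : ZMod q)) := by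
    rw [Finset.sum_congr rfl hmbar]
    rw [Finset.sum_congr rfl (fun (j : ℕ) (hj : j ∈ Finset.Icc 1 (q-1)) => (by ring :
      (k:ZMod q) * (((Wq q (k:ℤ) : ℤ) : ZMod q) - ((Wq q (j:ℤ) : ℤ) : ZMod q)
        - ((Wq q ((vk q k j : ℕ):ℤ) : ℤ) : ZMod q))
      = (k:ZMod q) * ((Wq q (k:ℤ) : ℤ) : ZMod q)
        - (k:ZMod q) * ((Wq q (j:ℤ) : ℤ) : ZMod q)
        - (k:ZMod q) * ((Wq q ((vk q k j : ℕ):ℤ) : ℤ) : ZMod q)))]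
    rw [Finset.sum_sub_distrib, Finset.sum_sub_distrib, Finset.sum_const, hcard,
      ← Finset.mul_sum, ← Finset.mul_sum, hvsum, nsmul_eq_mul, hq1]
    ring
  have hB : ∑ j ∈ Finset.Icc 1 (q-1), (((n j : ℤ) : ZMod q) * ((k:ZMod q))^q)
      = -(2 * ((k:ZMod q) * ∑ j ∈ Finset.Icc 1 (q-1), ((Wq q (j:ℤ) : ℤ) : ZMod q))) := by
    calc ∑ j ∈ Finset.Icc 1 (q-1), (((n j : ℤ) : ZMod q) * ((k:ZMod q))^q)
        = ∑ j ∈ Finset.Icc 1 (q-1),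
            (-((((Wq q (j:ℤ) : ℤ) : ZMod q) + ((Wq q ((jstar q j : ℕ):ℤ) : ℤ) : ZMod q))
              * (k:ZMod q))) := by
          apply Finset.sum_congr rfl
          intro j hj
          rw [hnbar j hj, hkq]
          ring
      _ = -(∑ j ∈ Finset.Icc 1 (q-1),
            ((((Wq q (j:ℤ) : ℤ) : ZMod q) + ((Wq q ((jstar q j : ℕ):ℤ) : ℤ) : ZMod q))
              * (k:ZMod q))) := by
          rw [← Finset.sum_neg_distrib]
      _ = -(((∑ j ∈ Finset.Icc 1 (q-1), ((Wq q (j:ℤ) : ℤ) : ZMod q))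
            + (∑ j ∈ Finset.Icc 1 (q-1), ((Wq q ((jstar q j : ℕ):ℤ) : ℤ) : ZMod q)))
              * (k:ZMod q)) := by
          rw [← Finset.sum_mul, Finset.sum_add_distrib]
      _ = _ := by rw [hssum]; ring
  rw [hA, hB, hq1]
  ring

end Key

lemma fqCoeff_eq (q t : ℕ) :
    fqCoeff q t = ∑ k ∈ Finset.Icc 1 (q-1), (-1:ℤ)^k * (t.choose k : ℤ) * gkZ q k := by
  unfold fqCoeff gkZ
  rw [Finset.sum_comm]
  apply Finset.sum_congr rfl
  intro k _
  simp only [Finset.mul_sum, mul_ite, mul_zero]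
  apply Finset.sum_congr rfl
  intro j _
  apply Finset.sum_congr rfl
  intro l _
  split_ifs with h
  · ring
  · rfl

lemma fqPoly_coeff (q t : ℕ) :
    (fqPoly q).coeff t = if t ∈ Finset.Icc 1 q then (fqCoeff q t : ℚ)/(t:ℚ) else 0 := by
  unfold fqPoly
  rw [Polynomial.finset_sum_coeff]
  have : ∀ u ∈ Finset.Icc 1 q,
      (Polynomial.C ((fqCoeff q u : ℚ) / (u : ℚ)) * Polynomial.X ^ u).coeff t
      = if t = u then (fqCoeff q u : ℚ)/(u:ℚ) else 0 := by
    intro u _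
    rw [Polynomial.coeff_C_mul, Polynomial.coeff_X_pow]
    split_ifs with h
    · rw [mul_one]
    · rw [mul_zero]
  rw [Finset.sum_congr rfl this, Finset.sum_ite_eq]

section Q
variable (q : ℕ) [Fact q.Prime]
variable (q : ℕ) [Fact q.Prime]

lemma cZ_not_dvd : ¬ (q:ℤ) ∣ cZ q := by
  intro hdvd
  rw [← ZMod.intCast_zmod_eq_zero_iff_dvd] at hdvd
  have hq2 := (Fact.out : q.Prime).two_le
  have h1 : ((cZ q : ℤ) : ZMod q) = ∑ j ∈ Finset.Icc 1 (q-1), ((j:ZMod q) * ((jstar q j : ℕ) : ZMod q)) := by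
    unfold cZ
    push_cast
    rfl
  have h2 : ((cZ q : ℤ) : ZMod q) = ((q-1 : ℕ) : ZMod q) := by
    rw [h1, Finset.sum_congr rfl (fun j hj => jstar_mul q hj), Finset.sum_const,
      Nat.card_Icc]
    simp
  rw [h2] at hdvd
  have h3 : ((q-1 : ℕ) : ZMod q) = -1 := by
    rw [Nat.cast_sub (by omega), ZMod.natCast_self]; ring
  rw [h3] at hdvd
  have : (1 : ZMod q) = 0 := by linear_combination -hdvd
  exact one_ne_zero this

lemma zls_zero (c : ℚ) : zLocSpan q c 0 := by
  refine ⟨0, 1, ?_, by simp⟩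
  have hq2 := (Fact.out : q.Prime).two_le
  intro h
  have := Int.le_of_dvd one_pos h
  omega

lemma zls_add {c x y : ℚ} (hx : zLocSpan q c x) (hy : zLocSpan q c y) :
    zLocSpan q c (x + y) := by
  obtain ⟨a1, b1, hb1, h1⟩ := hx
  obtain ⟨a2, b2, hb2, h2⟩ := hy
  have hqp : Prime (q:ℤ) := Nat.prime_iff_prime_int.mp Fact.out
  refine ⟨a1 * b2 + a2 * b1, b1 * b2, ?_, ?_⟩
  · intro h
    rcases hqp.dvd_mul.mp h with h | h
    · exact hb1 h
    · exact hb2 h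
  · push_cast
    ring_nf
    linear_combination (b2:ℚ) * h1 + (b1:ℚ) * h2

end Q

section Main
variable (q : ℕ) [Fact q.Prime]

lemma claimA (hq3 : 3 ≤ q) {t : ℕ} (ht : t ∈ Finset.Icc 1 q) :
    (fqCoeff q t : ℚ)/(t:ℚ) = ∑ k ∈ Finset.Icc 1 q,
      (-1:ℚ)^k * (((t-1).choose (k-1) : ℕ):ℚ) * (gkZ q k : ℚ) / (k:ℚ) := by
  simp only [Finset.mem_Icc] at ht
  have step1 : (fqCoeff q t : ℚ) = ∑ k ∈ Finset.Icc 1 (q-1),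
      (-1:ℚ)^k * ((t.choose k : ℕ):ℚ) * (gkZ q k : ℚ) := by
    rw [fqCoeff_eq]; push_cast; rfl
  have perk : ∀ k ∈ Finset.Icc 1 (q-1),
      (-1:ℚ)^k * ((t.choose k : ℕ):ℚ) * (gkZ q k : ℚ) / (t:ℚ)
      = (-1:ℚ)^k * (((t-1).choose (k-1) : ℕ):ℚ) * (gkZ q k : ℚ) / (k:ℚ) := by
    intro k hk
    simp only [Finset.mem_Icc] at hk
    have hnat : t * ((t-1).choose (k-1)) = t.choose k * k := by
      have h := Nat.add_one_mul_choose_eq (t-1) (k-1)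
      have h1 : t - 1 + 1 = t := by omega
      have h2 : k - 1 + 1 = k := by omega
      rw [h1, h2] at h
      exact h
    have hnatQ : (t:ℚ) * (((t-1).choose (k-1) : ℕ):ℚ) = ((t.choose k : ℕ):ℚ) * (k:ℚ) := by
      exact_mod_cast congrArg (fun m : ℕ => (m:ℚ)) hnat
    have ht0 : (t:ℚ) ≠ 0 := Nat.cast_ne_zero.mpr (by omega)
    have hk0 : (k:ℚ) ≠ 0 := Nat.cast_ne_zero.mpr (by omega)
    rw [div_eq_div_iff ht0 hk0]
    linear_combination (-(-1:ℚ)^k * (gkZ q k : ℚ)) * hnatQ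
  rw [step1, Finset.sum_div, Finset.sum_congr rfl perk]
  apply Finset.sum_subset
  · intro x hx; simp only [Finset.mem_Icc] at *; omega
  · intro x hx hx'
    simp only [Finset.mem_Icc] at hx hx'
    have : x = q := by omega
    rw [this, gk_top q]
    norm_num

lemma claimB (hq3 : 3 ≤ q) {t : ℕ} (ht : t ∈ Finset.Icc 1 q) :
    (cZ q : ℚ) * bcoef (q-1) t = ∑ k ∈ Finset.Icc 1 q,
      (-1:ℚ)^k * (((t-1).choose (k-1) : ℕ):ℚ) * ((cZ q : ℚ) * (k:ℚ)^q) / (k:ℚ) := by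
  simp only [Finset.mem_Icc] at ht
  unfold bcoef
  rw [Finset.mul_sum]
  have pern : ∀ n ∈ Finset.Icc 1 t,
      (cZ q : ℚ) * ((-1:ℚ)^n * ((t-1).choose (n-1) : ℚ) * (n:ℚ)^(q-1))
      = (-1:ℚ)^n * (((t-1).choose (n-1) : ℕ):ℚ) * ((cZ q : ℚ) * (n:ℚ)^q) / (n:ℚ) := by
    intro n hn
    simp only [Finset.mem_Icc] at hn
    have hn0 : (n:ℚ) ≠ 0 := Nat.cast_ne_zero.mpr (by omega)
    have hpow : (n:ℚ)^q = (n:ℚ)^(q-1) * (n:ℚ) := by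
      rw [← pow_succ]; congr 1; omega
    rw [eq_div_iff hn0, hpow]
    ring
  rw [Finset.sum_congr rfl pern]
  apply Finset.sum_subset
  · intro x hx; simp only [Finset.mem_Icc] at *; omega
  · intro x hx hx'
    simp only [Finset.mem_Icc] at hx hx'
    have hch : (t-1).choose (x-1) = 0 := Nat.choose_eq_zero_of_lt (by omega)
    rw [hch]
    norm_num

lemma main_coeff (hq3 : 3 ≤ q) {t : ℕ} (ht : t ∈ Finset.Icc 1 q) :
    zLocSpan q ((q:ℚ)^2) ((fqCoeff q t:ℚ)/(t:ℚ) - (cZ q:ℚ) * bcoef (q-1) t) := by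
  rw [claimA q hq3 ht, claimB q hq3 ht, ← Finset.sum_sub_distrib]
  apply Finset.sum_induction _ _ (fun a b ha hb => zls_add q ha hb) (zls_zero q _)
  intro k hk
  simp only [Finset.mem_Icc] at hk
  rw [div_sub_div_same]
  by_cases hkq : k ≤ q - 1
  · obtain ⟨M, hM⟩ := key_dvd q hq3 (k := k) (Finset.mem_Icc.mpr ⟨hk.1, hkq⟩)
    refine ⟨(-1)^k * ((t-1).choose (k-1) : ℤ) * M, (k:ℤ),
      notdvd_int q (Finset.mem_Icc.mpr ⟨hk.1, hkq⟩), ?_⟩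
    have hk0 : (k:ℚ) ≠ 0 := Nat.cast_ne_zero.mpr (by omega)
    have hMQ : (gkZ q k : ℚ) - (cZ q:ℚ)*(k:ℚ)^q = (q:ℚ)^2 * (M:ℚ) := by
      have := congrArg (fun z : ℤ => (z:ℚ)) hM
      push_cast at this
      linarith [this]
    push_cast
    rw [div_mul_cancel₀ _ hk0]
    have expand : (-1:ℚ)^k * ((t-1).choose (k-1) : ℚ) * (gkZ q k : ℚ)
        - (-1:ℚ)^k * ((t-1).choose (k-1) : ℚ) * ((cZ q : ℚ) * (k:ℚ)^q)
        = (-1:ℚ)^k * ((t-1).choose (k-1) : ℚ) * ((gkZ q k : ℚ) - (cZ q:ℚ)*(k:ℚ)^q) := by ring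
    rw [expand, hMQ]
    ring
  · have hkeq : k = q := by omega
    subst hkeq
    refine ⟨(-1)^(k+1) * ((t-1).choose (k-1) : ℤ) * cZ k * (k:ℤ)^(k-3), 1, ?_, ?_⟩
    · intro hdvd
      have hq2 := (Fact.out : k.Prime).two_le
      have := Int.le_of_dvd one_pos hdvd
      omega
    · rw [gk_top k]
      have hk0 : (k:ℚ) ≠ 0 := Nat.cast_ne_zero.mpr (by omega)
      have hqpow : (k:ℚ)^k = (k:ℚ)^2 * (k:ℚ)^(k-3) * (k:ℚ) := by
        rw [← pow_add, ← pow_succ]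
        congr 1
        omega
      push_cast
      rw [hqpow]
      field_simp
      ring



end Main

theorem stmt17 (q : ℕ) (hq : q.Prime) (hodd : Odd q) :
    ∃ h : Polynomial ℚ, h.degree ≤ q ∧
      (∀ x : ℚ, x ≠ 1 → h.eval x = Li (q - 1) (-x / (1 - x))) ∧
      (∀ t : ℕ, zLocSpan q ((q : ℚ)^2)
        ((fqPoly q - Polynomial.C ((∑ j ∈ Finset.Icc 1 (q - 1), (j : ℚ) * (jstar q j : ℚ))) * h).coeff t)) ∧
      ¬ (q : ℤ) ∣ (∑ j ∈ Finset.Icc 1 (q - 1), (j : ℤ) * (jstar q j : ℤ)) := by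
  haveI : Fact q.Prime := ⟨hq⟩
  have hq3 : 3 ≤ q := by
    have h2 := hq.two_le
    have ho := Nat.odd_iff.mp hodd
    omega
  have hcast : (∑ j ∈ Finset.Icc 1 (q - 1), (j : ℚ) * (jstar q j : ℚ)) = ((cZ q : ℤ) : ℚ) := by
    unfold cZ
    push_cast
    rfl
  refine ⟨Hpoly (q-1), ?_, ?_, ?_, ?_⟩
  · rw [← Polynomial.natDegree_le_iff_degree_le]
    have := Hpoly_natDegree_le (q-1)
    omega
  · intro x hx
    have h1x : (1:ℚ) - x ≠ 0 := sub_ne_zero.mpr (Ne.symm hx)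
    have ht : -x/(1-x) ≠ 1 := by
      intro h
      rw [div_eq_one_iff_eq h1x] at h
      have : (0:ℚ) = 1 := by linarith
      norm_num at this
    rw [Li_eval (q-1) _ ht]
    have harg : (-x/(1-x)) / ((-x/(1-x)) - 1) = x := by
      rw [div_sub_one h1x, div_div_div_cancel_right₀]
      · have h4 : -x - (1-x) = -1 := by ring
        rw [h4]
        norm_num
      · exact h1x
    rw [harg]
  · intro t
    have hcoeff : (fqPoly q - Polynomial.C (∑ j ∈ Finset.Icc 1 (q - 1), (j : ℚ) * (jstar q j : ℚ)) * Hpoly (q-1)).coeff t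
        = (fqPoly q).coeff t - ((cZ q : ℤ) : ℚ) * bcoef (q-1) t := by
      rw [Polynomial.coeff_sub, Polynomial.coeff_C_mul, Hpoly_coeff, hcast]
    rw [hcoeff, fqPoly_coeff]
    by_cases htq : t ∈ Finset.Icc 1 q
    · rw [if_pos htq]
      exact main_coeff q hq3 htq
    · rw [if_neg htq]
      have hb0 : bcoef (q-1) t = 0 := by
        simp only [Finset.mem_Icc] at htq
        rcases Nat.eq_zero_or_pos t with h0 | h0
        · subst h0; simp [bcoef]
        · exact bcoef_vanish (q-1) t (by omega)
      rw [hb0]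
      simpa using zls_zero q ((q:ℚ)^2)
  · exact cZ_not_dvd q
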